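/- Cut-and-paste for the poset of finite YZR(ε)-systems: given a finite YZR(ε)-system s with universe an initial segment N^s of ω and any finite YZR(ε)-system q, there is a finite YZR(ε)-system t extending s (universe N^t ⊇ N^s, with r̄^t, j̄^t, k̄^t extending those of s) together with an increasing injection φ: X^q → [N^s, N^t) such that for each nonempty v ⊆ X^q, r̄^t(φ[v]) = r̄^q(v), j̄^t(φ[v]) = j̄^q(v), and k̄^t(φ[v]) = k̄^q(v). -/

import Mathlib

open scoped Classical

universe u v w

noncomputable def onat (o : Ordinal.{u}) : ℕ := o.card.toNat

@[simp] lemma onat_natCast (n : ℕ) : onat (n : Ordinal.{u}) = n := by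
  simp [onat, Ordinal.card_nat]

lemma ord_lt_nat {x : Ordinal.{u}} {n : ℕ} (h : x < (n : Ordinal.{u})) :
    ∃ k : ℕ, x = (k : Ordinal.{u}) ∧ k < n := by
  obtain ⟨k, rfl⟩ := Ordinal.lt_omega0.1 (h.trans (Ordinal.nat_lt_omega0 n))
  exact ⟨k, rfl, by exact_mod_cast h⟩

noncomputable def phi (Ns : ℕ) (F : Finset Ordinal.{u}) (x : Ordinal.{u}) : Ordinal.{v} :=
  if h : x ∈ F then ((Ns + ((F.orderIsoOfFin rfl).symm ⟨x, h⟩ : Fin F.card) : ℕ) : Ordinal.{v})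
  else 0

noncomputable def psi (Ns : ℕ) (F : Finset Ordinal.{u}) (y : Ordinal.{v}) : Ordinal.{u} :=
  if h : onat y - Ns < F.card then ((F.orderIsoOfFin rfl) ⟨onat y - Ns, h⟩ : Ordinal.{u}) else 0

lemma phi_eq (Ns : ℕ) (F : Finset Ordinal.{u}) {x : Ordinal.{u}} (h : x ∈ F) :
    phi.{u,v} Ns F x = ((Ns + ((F.orderIsoOfFin rfl).symm ⟨x, h⟩ : Fin F.card) : ℕ) : Ordinal.{v}) :=
  dif_pos h

lemma phi_ge (Ns : ℕ) (F : Finset Ordinal.{u}) {x : Ordinal.{u}} (h : x ∈ F) :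
    (Ns : Ordinal.{v}) ≤ phi.{u,v} Ns F x := by
  rw [phi_eq Ns F h]
  exact_mod_cast Nat.le_add_right Ns _

lemma phi_lt (Ns : ℕ) (F : Finset Ordinal.{u}) {x : Ordinal.{u}} (h : x ∈ F) :
    phi.{u,v} Ns F x < ((Ns + F.card : ℕ) : Ordinal.{v}) := by
  rw [phi_eq Ns F h]
  exact_mod_cast Nat.add_lt_add_left (Fin.is_lt _) Ns

lemma phi_strictMonoOn (Ns : ℕ) (F : Finset Ordinal.{u}) :
    StrictMonoOn (phi.{u,v} Ns F) ↑F := by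
  intro x hx y hy hxy
  simp only [Finset.mem_coe] at hx hy
  rw [phi_eq Ns F hx, phi_eq Ns F hy]
  have : (F.orderIsoOfFin rfl).symm ⟨x, hx⟩ < (F.orderIsoOfFin rfl).symm ⟨y, hy⟩ := by
    rw [OrderIso.lt_iff_lt]
    exact Subtype.mk_lt_mk.2 hxy
  exact_mod_cast Nat.add_lt_add_left this Ns

lemma phi_injOn (Ns : ℕ) (F : Finset Ordinal.{u}) :
    Set.InjOn (phi.{u,v} Ns F) ↑F := by
  intro x hx y hy hxy
  simp only [Finset.mem_coe] at hx hy
  rw [phi_eq Ns F hx, phi_eq Ns F hy] at hxy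
  have h1 : Ns + ((F.orderIsoOfFin rfl).symm ⟨x, hx⟩ : Fin F.card).1
      = Ns + ((F.orderIsoOfFin rfl).symm ⟨y, hy⟩ : Fin F.card).1 := by exact_mod_cast hxy
  have h2 : (F.orderIsoOfFin rfl).symm ⟨x, hx⟩ = (F.orderIsoOfFin rfl).symm ⟨y, hy⟩ :=
    Fin.ext (Nat.add_left_cancel h1)
  have := (F.orderIsoOfFin rfl).symm.injective h2
  exact congrArg Subtype.val this

lemma psi_phi (Ns : ℕ) (F : Finset Ordinal.{u}) {x : Ordinal.{u}} (h : x ∈ F) :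
    psi.{u,v} Ns F (phi.{u,v} Ns F x) = x := by
  rw [phi_eq Ns F h, psi]
  have h1 : onat ((Ns + ((F.orderIsoOfFin rfl).symm ⟨x, h⟩ : Fin F.card) : ℕ) : Ordinal.{v}) - Ns
      = ((F.orderIsoOfFin rfl).symm ⟨x, h⟩ : Fin F.card).1 := by
    rw [onat_natCast]; omega
  have hlt : onat ((Ns + ((F.orderIsoOfFin rfl).symm ⟨x, h⟩ : Fin F.card) : ℕ) : Ordinal.{v}) - Ns
      < F.card := by rw [h1]; exact Fin.is_lt _
  rw [dif_pos hlt]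
  have h2 : (⟨onat ((Ns + ((F.orderIsoOfFin rfl).symm ⟨x, h⟩ : Fin F.card) : ℕ) : Ordinal.{v}) - Ns, hlt⟩ : Fin F.card)
      = (F.orderIsoOfFin rfl).symm ⟨x, h⟩ := Fin.ext h1
  rw [h2, OrderIso.apply_symm_apply]

lemma psi_mem_and_phi_psi (Ns : ℕ) (F : Finset Ordinal.{u}) {y : Ordinal.{v}}
    (h1 : (Ns : Ordinal.{v}) ≤ y) (h2 : y < ((Ns + F.card : ℕ) : Ordinal.{v})) :
    psi.{u,v} Ns F y ∈ F ∧ phi.{u,v} Ns F (psi.{u,v} Ns F y) = y := by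
  obtain ⟨k, rfl, hk⟩ := ord_lt_nat h2
  have hNk : Ns ≤ k := by exact_mod_cast h1
  have hd : onat ((k:ℕ) : Ordinal.{v}) - Ns < F.card := by rw [onat_natCast]; omega
  rw [psi, dif_pos hd]
  set i : Fin F.card := ⟨onat ((k:ℕ) : Ordinal.{v}) - Ns, hd⟩ with hi
  have hmem : ((F.orderIsoOfFin rfl) i : Ordinal.{u}) ∈ F := ((F.orderIsoOfFin rfl) i).2
  refine ⟨hmem, ?_⟩
  rw [phi_eq Ns F hmem]
  have h3 : (⟨((F.orderIsoOfFin rfl) i : Ordinal.{u}), hmem⟩ : {x // x ∈ F}) = (F.orderIsoOfFin rfl) i :=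
    Subtype.ext rfl
  rw [h3, OrderIso.symm_apply_apply]
  have : Ns + i.1 = k := by rw [hi]; simp only [onat_natCast]; omega
  rw [this]

lemma phi_lt_phi_iff (Ns : ℕ) (F : Finset Ordinal.{u}) {x c : Ordinal.{u}} (hx : x ∈ F) (hc : c ∈ F) :
    phi.{u,v} Ns F x < phi.{u,v} Ns F c ↔ x < c :=
  (phi_strictMonoOn.{u,v} Ns F).lt_iff_lt hx hc

lemma filter_image_card (Ns : ℕ) (F : Finset Ordinal.{u}) (v : Finset Ordinal.{u}) (hv : v ⊆ F)
    {c : Ordinal.{u}} (hc : c ∈ F) :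
    ((v.image (phi.{u,v} Ns F)).filter (fun x => x < phi.{u,v} Ns F c)).card
      = (v.filter (fun x => x < c)).card := by
  have himg : (v.image (phi Ns F)).filter (fun x => x < phi Ns F c)
      = (v.filter (fun x => x < c)).image (phi Ns F) := by
    ext y
    simp only [Finset.mem_filter, Finset.mem_image]
    constructor
    · rintro ⟨⟨x, hxv, rfl⟩, hlt⟩
      exact ⟨x, ⟨hxv, (phi_lt_phi_iff Ns F (hv hxv) hc).1 hlt⟩, rfl⟩
    · rintro ⟨x, ⟨hxv, hlt⟩, rfl⟩
      exact ⟨⟨x, hxv, rfl⟩, (phi_lt_phi_iff Ns F (hv hxv) hc).2 hlt⟩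
  rw [himg]
  apply Finset.card_image_of_injOn
  exact (phi_injOn Ns F).mono (by
    intro x hx
    simp only [Finset.coe_filter, Set.mem_setOf_eq] at hx
    exact Finset.mem_coe.2 (hv hx.1))

lemma image_psi_image_phi (Ns : ℕ) (F : Finset Ordinal.{u}) (v : Finset Ordinal.{u}) (hv : v ⊆ F) :
    (v.image (phi.{u,v} Ns F)).image (psi.{u,v} Ns F) = v := by
  rw [Finset.image_image]
  have : v.image (psi Ns F ∘ phi Ns F) = v.image id := by
    apply Finset.image_congr
    intro x hx
    exact psi_phi Ns F (hv hx)
  rw [this, Finset.image_id]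

/-- every relevant copy-zone ordinal is in the image of phi -/
lemma phi_psi_of_Ico (Ns : ℕ) (F : Finset Ordinal.{u}) {y : Ordinal.{v}}
    (h : y ∈ Set.Ico (Ns : Ordinal.{v}) ((Ns + F.card : ℕ) : Ordinal.{v})) :
    psi.{u,v} Ns F y ∈ F ∧ phi.{u,v} Ns F (psi.{u,v} Ns F y) = y :=
  psi_mem_and_phi_psi Ns F h.1 h.2

lemma image_phi_image_psi (Ns : ℕ) (F : Finset Ordinal.{u}) (w : Finset Ordinal.{v})
    (hw : ↑w ⊆ Set.Ico (Ns : Ordinal.{v}) ((Ns + F.card : ℕ) : Ordinal.{v})) :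
    (w.image (psi.{u,v} Ns F)).image (phi.{u,v} Ns F) = w := by
  rw [Finset.image_image]
  have : w.image (phi Ns F ∘ psi Ns F) = w.image id := by
    apply Finset.image_congr
    intro x hx
    exact (phi_psi_of_Ico Ns F (hw hx)).2
  rw [this, Finset.image_id]

lemma image_psi_subset (Ns : ℕ) (F : Finset Ordinal.{u}) (w : Finset Ordinal.{v})
    (hw : ↑w ⊆ Set.Ico (Ns : Ordinal.{v}) ((Ns + F.card : ℕ) : Ordinal.{v})) :
    ↑(w.image (psi.{u,v} Ns F)) ⊆ (↑F : Set Ordinal.{u}) := by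
  intro y hy
  simp only [Finset.coe_image, Set.mem_image, Finset.mem_coe] at hy
  obtain ⟨x, hx, rfl⟩ := hy
  exact (phi_psi_of_Ico Ns F (hw hx)).1

/-- write any finset of ordinals below a natural as an image of naturals -/
lemma natRepr (n : ℕ) (w : Finset Ordinal.{u}) (hw : ↑w ⊆ Set.Iio ((n : ℕ) : Ordinal.{u})) :
    (w.image onat).image (Nat.cast : ℕ → Ordinal.{u}) = w ∧ w.image onat ⊆ Finset.range n := by
  constructor
  · rw [Finset.image_image]
    have : w.image ((Nat.cast : ℕ → Ordinal.{u}) ∘ onat) = w.image id := by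
      apply Finset.image_congr
      intro x hx
      obtain ⟨k, rfl, _⟩ := ord_lt_nat (hw hx)
      simp
    rw [this, Finset.image_id]
  · intro i hi
    simp only [Finset.mem_image] at hi
    obtain ⟨x, hx, rfl⟩ := hi
    obtain ⟨k, rfl, hk⟩ := ord_lt_nat (hw hx)
    simpa using hk

/-- sums of `onat` distinguish `insert b (w.erase a)` from `w` when `a ∈ w`, `b ∉ w`,
both inside `Iio n`. -/
lemma sum_onat_ne (n : ℕ) (w : Finset Ordinal.{u}) (hw : ↑w ⊆ Set.Iio ((n : ℕ) : Ordinal.{u}))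
    {a b : Ordinal.{u}} (ha : a ∈ w) (hb : b ∉ w) (hbn : b < ((n : ℕ) : Ordinal.{u})) :
    (insert b (w.erase a)).sum onat ≠ w.sum onat := by
  have hbe : b ∉ w.erase a := fun h => hb (Finset.mem_of_mem_erase h)
  rw [Finset.sum_insert hbe, ← Finset.add_sum_erase w onat ha]
  intro h
  have h2 : onat b = onat a := by omega
  obtain ⟨kb, rfl, _⟩ := ord_lt_nat hbn
  obtain ⟨ka, hka, _⟩ := ord_lt_nat (hw ha)
  subst hka
  simp only [onat_natCast] at h2
  exact hb (by rw [h2]; exact ha)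

structure YZRSystem (ε : Ordinal) where
  X : Set Ordinal
  nonempty : X.Nonempty
  r : Finset Ordinal → Ordinal
  j : Finset Ordinal → ℕ
  k : Finset Ordinal → ℕ
  r_le : ∀ w : Finset Ordinal, w.Nonempty → ↑w ⊆ X → r w ≤ ε
  mono : ∀ u w : Finset Ordinal, u.Nonempty → u ⊆ w → ↑w ⊆ X → r w ≤ r u
  r_pos : ∀ a ∈ X, 0 < r {a}
  k_lt : ∀ w : Finset Ordinal, w.Nonempty → ↑w ⊆ X → k w < w.card
  witness : ∀ w : Finset Ordinal, w.Nonempty → ↑w ⊆ X →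
    ∀ a ∈ w, (w.filter (fun x => x < a)).card = k w →
    ∀ b ∈ X, b ∉ w →
    ¬ ((w.filter (fun x => x < b)).card = k w ∧
       j (insert b (w.erase a)) = j w ∧ r (insert b w) = r w)

section Construction

variable {ε : Ordinal.{v}} (s : YZRSystem.{v} ε) (q : YZRSystem.{v} ε) (Ns : ℕ)
  (F : Finset Ordinal.{v})

noncomputable def Rt : Finset Ordinal.{v} → Ordinal.{v} := fun w =>
  if ↑w ⊆ Set.Iio ((Ns : ℕ) : Ordinal.{v}) then s.r w
  else if ↑w ⊆ Set.Ico ((Ns : ℕ) : Ordinal.{v}) ((Ns + F.card : ℕ) : Ordinal.{v}) then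
    q.r (w.image (psi Ns F))
  else 0

noncomputable def Kt : Finset Ordinal.{v} → ℕ := fun w =>
  if ↑w ⊆ Set.Iio ((Ns : ℕ) : Ordinal.{v}) then s.k w
  else if ↑w ⊆ Set.Ico ((Ns : ℕ) : Ordinal.{v}) ((Ns + F.card : ℕ) : Ordinal.{v}) then
    q.k (w.image (psi Ns F))
  else 0

noncomputable def Jpure : Finset Ordinal.{v} → ℕ := fun w =>
  if ↑w ⊆ Set.Iio ((Ns : ℕ) : Ordinal.{v}) then s.j w
  else q.j (w.image (psi Ns F))

noncomputable def Mb : ℕ :=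
  ((Finset.range (Ns + F.card)).powerset.sup fun uu =>
    Jpure s q Ns F (uu.image (Nat.cast : ℕ → Ordinal.{v}))) + 1

noncomputable def Jt : Finset Ordinal.{v} → ℕ := fun w =>
  if ↑w ⊆ Set.Iio ((Ns : ℕ) : Ordinal.{v})
      ∨ ↑w ⊆ Set.Ico ((Ns : ℕ) : Ordinal.{v}) ((Ns + F.card : ℕ) : Ordinal.{v}) then
    Jpure s q Ns F w
  else Mb s q Ns F + w.sum onat

lemma Rt_s {w : Finset Ordinal.{v}} (h : ↑w ⊆ Set.Iio ((Ns : ℕ) : Ordinal.{v})) :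
    Rt s q Ns F w = s.r w := by simp only [Rt]; rw [if_pos h]

lemma Kt_s {w : Finset Ordinal.{v}} (h : ↑w ⊆ Set.Iio ((Ns : ℕ) : Ordinal.{v})) :
    Kt s q Ns F w = s.k w := by simp only [Kt]; rw [if_pos h]

lemma Jt_s {w : Finset Ordinal.{v}} (h : ↑w ⊆ Set.Iio ((Ns : ℕ) : Ordinal.{v})) :
    Jt s q Ns F w = s.j w := by
  simp only [Jt, Jpure]; rw [if_pos (Or.inl h), if_pos h]

lemma not_Iio_of_Ico {w : Finset Ordinal.{v}} (hne : w.Nonempty)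
    (h : ↑w ⊆ Set.Ico ((Ns : ℕ) : Ordinal.{v}) ((Ns + F.card : ℕ) : Ordinal.{v})) :
    ¬ (↑w ⊆ Set.Iio ((Ns : ℕ) : Ordinal.{v})) := by
  obtain ⟨x, hx⟩ := hne
  intro hcon
  exact absurd (hcon hx) (not_lt.2 (h hx).1)

lemma Rt_q {w : Finset Ordinal.{v}} (hne : w.Nonempty)
    (h : ↑w ⊆ Set.Ico ((Ns : ℕ) : Ordinal.{v}) ((Ns + F.card : ℕ) : Ordinal.{v})) :
    Rt s q Ns F w = q.r (w.image (psi Ns F)) := by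
  simp only [Rt]; rw [if_neg (not_Iio_of_Ico Ns F hne h), if_pos h]

lemma Kt_q {w : Finset Ordinal.{v}} (hne : w.Nonempty)
    (h : ↑w ⊆ Set.Ico ((Ns : ℕ) : Ordinal.{v}) ((Ns + F.card : ℕ) : Ordinal.{v})) :
    Kt s q Ns F w = q.k (w.image (psi Ns F)) := by
  simp only [Kt]; rw [if_neg (not_Iio_of_Ico Ns F hne h), if_pos h]

lemma Jt_q {w : Finset Ordinal.{v}} (hne : w.Nonempty)
    (h : ↑w ⊆ Set.Ico ((Ns : ℕ) : Ordinal.{v}) ((Ns + F.card : ℕ) : Ordinal.{v})) :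
    Jt s q Ns F w = q.j (w.image (psi Ns F)) := by
  simp only [Jt, Jpure]
  rw [if_pos (Or.inr h), if_neg (not_Iio_of_Ico Ns F hne h)]

lemma Rt_mixed {w : Finset Ordinal.{v}} (h1 : ¬ (↑w ⊆ Set.Iio ((Ns : ℕ) : Ordinal.{v})))
    (h2 : ¬ (↑w ⊆ Set.Ico ((Ns : ℕ) : Ordinal.{v}) ((Ns + F.card : ℕ) : Ordinal.{v}))) :
    Rt s q Ns F w = 0 := by simp only [Rt]; rw [if_neg h1, if_neg h2]

lemma Kt_mixed {w : Finset Ordinal.{v}} (h1 : ¬ (↑w ⊆ Set.Iio ((Ns : ℕ) : Ordinal.{v})))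
    (h2 : ¬ (↑w ⊆ Set.Ico ((Ns : ℕ) : Ordinal.{v}) ((Ns + F.card : ℕ) : Ordinal.{v}))) :
    Kt s q Ns F w = 0 := by simp only [Kt]; rw [if_neg h1, if_neg h2]

lemma Jt_mixed {w : Finset Ordinal.{v}} (h1 : ¬ (↑w ⊆ Set.Iio ((Ns : ℕ) : Ordinal.{v})))
    (h2 : ¬ (↑w ⊆ Set.Ico ((Ns : ℕ) : Ordinal.{v}) ((Ns + F.card : ℕ) : Ordinal.{v}))) :
    Jt s q Ns F w = Mb s q Ns F + w.sum onat := by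
  simp only [Jt]; rw [if_neg (by rintro (h | h) <;> [exact h1 h; exact h2 h])]

lemma Jt_pure_lt {w : Finset Ordinal.{v}}
    (hw : ↑w ⊆ Set.Iio ((Ns + F.card : ℕ) : Ordinal.{v}))
    (h : ↑w ⊆ Set.Iio ((Ns : ℕ) : Ordinal.{v})
      ∨ ↑w ⊆ Set.Ico ((Ns : ℕ) : Ordinal.{v}) ((Ns + F.card : ℕ) : Ordinal.{v})) :
    Jt s q Ns F w < Mb s q Ns F := by
  simp only [Jt]; rw [if_pos h]
  obtain ⟨hrep, hsub⟩ := natRepr (Ns + F.card) w hw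
  have : Jpure s q Ns F w = Jpure s q Ns F ((w.image onat).image (Nat.cast : ℕ → Ordinal.{v})) := by
    rw [hrep]
  rw [this, Mb]
  exact Nat.lt_succ_of_le (Finset.le_sup
    (f := fun uu => Jpure s q Ns F (Finset.image Nat.cast uu)) (Finset.mem_powerset.2 hsub))

end Construction

lemma filter_zero_min {w : Finset Ordinal.{v}} {a : Ordinal.{v}}
    (h : (w.filter (fun x => x < a)).card = 0) : ∀ x ∈ w, ¬ x < a := by
  intro x hx hlt
  have hm : x ∈ w.filter (fun x => x < a) := Finset.mem_filter.2 ⟨hx, hlt⟩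
  rw [Finset.card_eq_zero] at h
  rw [h] at hm
  exact absurd hm (Finset.notMem_empty x)

lemma image_phi_Ico (Ns : ℕ) (F : Finset Ordinal.{u}) {vq : Finset Ordinal.{u}}
    (hv : vq ⊆ F) :
    ↑(vq.image (phi.{u,v} Ns F)) ⊆ Set.Ico ((Ns : ℕ) : Ordinal.{v}) ((Ns + F.card : ℕ) : Ordinal.{v}) := by
  intro y hy
  simp only [Finset.coe_image, Set.mem_image, Finset.mem_coe] at hy
  obtain ⟨x, hx, rfl⟩ := hy
  exact ⟨phi_ge Ns F (hv hx), phi_lt Ns F (hv hx)⟩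

lemma image_erase_phi (Ns : ℕ) (F : Finset Ordinal.{u}) {vv : Finset Ordinal.{u}} (hvv : vv ⊆ F)
    {a : Ordinal.{u}} (ha : a ∈ F) :
    (vv.erase a).image (phi.{u,v} Ns F)
      = (vv.image (phi.{u,v} Ns F)).erase (phi.{u,v} Ns F a) := by
  ext y
  constructor
  · intro hy
    obtain ⟨x, hx, rfl⟩ := Finset.mem_image.1 hy
    obtain ⟨hxa, hxv⟩ := Finset.mem_erase.1 hx
    exact Finset.mem_erase.2 ⟨fun hEq => hxa ((phi_injOn Ns F)
      (Finset.mem_coe.2 (hvv hxv)) (Finset.mem_coe.2 ha) hEq),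
      Finset.mem_image_of_mem _ hxv⟩
  · intro hy
    obtain ⟨hya, hyi⟩ := Finset.mem_erase.1 hy
    obtain ⟨x, hxv, rfl⟩ := Finset.mem_image.1 hyi
    exact Finset.mem_image_of_mem _ (Finset.mem_erase.2 ⟨fun h => hya (by rw [h]), hxv⟩)

lemma Tt_witness {ε : Ordinal.{v}} (s : YZRSystem.{v} ε) (q : YZRSystem.{v} ε) (Ns : ℕ)
    (F : Finset Ordinal.{v})
    (hXs : s.X = Set.Iio ((Ns : ℕ) : Ordinal.{v})) (hF : ↑F = q.X) :
    ∀ w : Finset Ordinal.{v}, w.Nonempty → ↑w ⊆ Set.Iio ((Ns + F.card : ℕ) : Ordinal.{v}) →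
    ∀ a ∈ w, (w.filter (fun x => x < a)).card = Kt s q Ns F w →
    ∀ b ∈ Set.Iio ((Ns + F.card : ℕ) : Ordinal.{v}), b ∉ w →
    ¬ ((w.filter (fun x => x < b)).card = Kt s q Ns F w ∧
       Jt s q Ns F (insert b (w.erase a)) = Jt s q Ns F w ∧
       Rt s q Ns F (insert b w) = Rt s q Ns F w) := by
  intro w hwne hw a haw hka b hb hbw
  rintro ⟨C1, C2, C3⟩
  have herase_sub : ↑(w.erase a) ⊆ (↑w : Set Ordinal.{v}) :=
    Finset.coe_subset.2 (Finset.erase_subset a w)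
  by_cases hws : ↑w ⊆ Set.Iio ((Ns : ℕ) : Ordinal.{v})
  · by_cases hbs : b < ((Ns : ℕ) : Ordinal.{v})
    · -- Case A1 : everything inside s
      have hIns : ↑(insert b w) ⊆ Set.Iio ((Ns : ℕ) : Ordinal.{v}) := by
        rw [Finset.coe_insert]; exact Set.insert_subset hbs hws
      have hInsE : ↑(insert b (w.erase a)) ⊆ Set.Iio ((Ns : ℕ) : Ordinal.{v}) := by
        rw [Finset.coe_insert]
        exact Set.insert_subset hbs (herase_sub.trans hws)
      refine s.witness w hwne (by rw [hXs]; exact hws) a haw ?_ b ?_ hbw ⟨?_, ?_, ?_⟩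
      · rw [← Kt_s s q Ns F hws]; exact hka
      · rw [hXs]; exact hbs
      · rw [← Kt_s s q Ns F hws]; exact C1
      · rw [← Jt_s s q Ns F hInsE, ← Jt_s s q Ns F hws]; exact C2
      · rw [← Rt_s s q Ns F hIns, ← Rt_s s q Ns F hws]; exact C3
    · -- Case A2 : w in s, b in the copy zone
      push_neg at hbs
      by_cases hcard : w.card = 1
      · obtain ⟨a0, ha0⟩ := Finset.card_eq_one.1 hcard
        subst ha0
        have ha' : a = a0 := Finset.mem_singleton.1 haw
        subst ha'
        have hk0 : Kt s q Ns F {a} = 0 := by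
          have := s.k_lt {a} (Finset.singleton_nonempty a) (by rw [hXs]; exact hws)
          rw [Kt_s s q Ns F hws]
          simpa using this
        have hab : a < b := lt_of_lt_of_le (hws (by simp)) hbs
        rw [hk0, Finset.filter_singleton, if_pos hab] at C1
        simp at C1
      · have h2 : 2 ≤ w.card := by
          have := Finset.card_pos.2 hwne
          omega
        have herane : (w.erase a).Nonempty := Finset.card_pos.1 (by
          rw [Finset.card_erase_of_mem haw]; omega)
        obtain ⟨x1, hx1⟩ := herane
        have hx1w : x1 ∈ w := Finset.mem_of_mem_erase hx1
        have hmix1 : ¬ (↑(insert b (w.erase a)) ⊆ Set.Iio ((Ns : ℕ) : Ordinal.{v})) := by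
          intro h
          exact absurd (h (by simp)) (not_lt.2 hbs)
        have hmix2 : ¬ (↑(insert b (w.erase a)) ⊆
            Set.Ico ((Ns : ℕ) : Ordinal.{v}) ((Ns + F.card : ℕ) : Ordinal.{v})) := by
          intro h
          have : x1 ∈ (↑(insert b (w.erase a)) : Set Ordinal.{v}) :=
            Finset.mem_coe.2 (Finset.mem_insert_of_mem hx1)
          exact absurd (h this).1 (not_le.2 (hws hx1w))
        have hlt := Jt_pure_lt s q Ns F hw (Or.inl hws)
        rw [Jt_mixed s q Ns F hmix1 hmix2] at C2
        omega
  · by_cases hwq : ↑w ⊆ Set.Ico ((Ns : ℕ) : Ordinal.{v}) ((Ns + F.card : ℕ) : Ordinal.{v})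
    · -- Case B : w is in the copy zone
      set v : Finset Ordinal.{v} := w.image (psi Ns F) with hv
      have hvF : v ⊆ F := by
        intro x hx
        simp only [hv, Finset.mem_image] at hx
        obtain ⟨y, hy, rfl⟩ := hx
        exact (@phi_psi_of_Ico.{v, v} Ns F y (hwq hy)).1
      have hwv : v.image (phi Ns F) = w := image_phi_image_psi Ns F w hwq
      have ha'F : psi Ns F a ∈ F := (@phi_psi_of_Ico.{v, v} Ns F a (hwq haw)).1
      have hpa : phi Ns F (psi Ns F a) = a := (@phi_psi_of_Ico.{v, v} Ns F a (hwq haw)).2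
      have ha'v : psi Ns F a ∈ v := Finset.mem_image_of_mem _ haw
      have hKv : Kt s q Ns F w = q.k v := Kt_q s q Ns F hwne hwq
      by_cases hbq : ((Ns : ℕ) : Ordinal.{v}) ≤ b
      · -- Case B1 : b also in the copy zone; use q.witness
        have hbIco : b ∈ Set.Ico ((Ns : ℕ) : Ordinal.{v}) ((Ns + F.card : ℕ) : Ordinal.{v}) :=
          ⟨hbq, hb⟩
        have hcF : psi Ns F b ∈ F := (@phi_psi_of_Ico.{v, v} Ns F b hbIco).1
        have hpc : phi Ns F (psi Ns F b) = b := (@phi_psi_of_Ico.{v, v} Ns F b hbIco).2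
        have hcv : psi Ns F b ∉ v := by
          intro hc
          apply hbw
          rw [← hwv]
          rw [← hpc]
          exact Finset.mem_image_of_mem _ hc
        -- translate the counts
        have ecount : ∀ {c : Ordinal.{v}} (hc : c ∈ F),
            ((w.filter (fun x => x < phi Ns F c)).card = (v.filter (fun x => x < c)).card) := by
          intro c hc
          conv_lhs => rw [← hwv]
          exact filter_image_card Ns F v hvF hc
        have ca : (v.filter (fun x => x < psi Ns F a)).card = q.k v := by
          rw [← ecount ha'F, hpa]
          rw [hka, hKv]
        have cb : (v.filter (fun x => x < psi Ns F b)).card = q.k v := by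
          rw [← ecount hcF, hpc, C1, hKv]
        -- translate j
        have hInsE_sub : insert (psi Ns F b) (v.erase (psi Ns F a)) ⊆ F :=
          Finset.insert_subset hcF ((Finset.erase_subset _ _).trans hvF)
        have him : (insert (psi Ns F b) (v.erase (psi Ns F a))).image (phi Ns F)
            = insert b (w.erase a) := by
          rw [Finset.image_insert, image_erase_phi Ns F hvF ha'F, hwv, hpc, hpa]
        have hj : Jt s q Ns F (insert b (w.erase a))
            = q.j (insert (psi Ns F b) (v.erase (psi Ns F a))) := by
          rw [← him, Jt_q s q Ns F ((Finset.insert_nonempty _ _).image _)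
            (image_phi_Ico Ns F hInsE_sub),
            image_psi_image_phi Ns F _ (Finset.coe_subset.2 hInsE_sub)]
        -- translate r
        have hIns_sub : insert (psi Ns F b) v ⊆ F := Finset.insert_subset hcF hvF
        have hins : (insert (psi Ns F b) v).image (phi Ns F) = insert b w := by
          rw [Finset.image_insert, hwv, hpc]
        have hr : Rt s q Ns F (insert b w) = q.r (insert (psi Ns F b) v) := by
          rw [← hins, Rt_q s q Ns F ((Finset.insert_nonempty _ _).image _)
            (image_phi_Ico Ns F hIns_sub),
            image_psi_image_phi Ns F _ (Finset.coe_subset.2 hIns_sub)]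
        have hvX : ↑v ⊆ q.X := by rw [← hF]; exact Finset.coe_subset.2 hvF
        refine q.witness v ⟨_, ha'v⟩ hvX (psi Ns F a) ha'v ca (psi Ns F b)
          (by rw [← hF]; exact hcF) hcv ⟨cb, ?_, ?_⟩
        · rw [← hj, C2, Jt_q s q Ns F hwne hwq]
        · rw [← hr, C3, Rt_q s q Ns F hwne hwq]
      · -- Case B2 : b on the s side
        push_neg at hbq
        by_cases hcard : w.card = 1
        · obtain ⟨a0, ha0⟩ := Finset.card_eq_one.1 hcard
          subst ha0
          have ha' : a = a0 := Finset.mem_singleton.1 haw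
          subst ha'
          have hmix1 : ¬ (↑(insert b ({a} : Finset Ordinal.{v})) ⊆
              Set.Iio ((Ns : ℕ) : Ordinal.{v})) := by
            intro h
            have : a ∈ ↑(insert b ({a} : Finset Ordinal.{v})) := by simp
            exact absurd (h this) (not_lt.2 (hwq (by simp)).1)
          have hmix2 : ¬ (↑(insert b ({a} : Finset Ordinal.{v})) ⊆
              Set.Ico ((Ns : ℕ) : Ordinal.{v}) ((Ns + F.card : ℕ) : Ordinal.{v})) := by
            intro h
            exact absurd (h (by simp)).1 (not_le.2 hbq)
          have hpos : 0 < Rt s q Ns F {a} := by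
            rw [Rt_q s q Ns F hwne hwq, Finset.image_singleton]
            exact q.r_pos _ (by rw [← hF]; exact ha'F)
          rw [Rt_mixed s q Ns F hmix1 hmix2] at C3
          rw [← C3] at hpos
          exact absurd hpos (lt_irrefl 0)
        · have h2 : 2 ≤ w.card := by
            have := Finset.card_pos.2 hwne
            omega
          have herane : (w.erase a).Nonempty := Finset.card_pos.1 (by
            rw [Finset.card_erase_of_mem haw]; omega)
          obtain ⟨x1, hx1⟩ := herane
          have hx1w : x1 ∈ w := Finset.mem_of_mem_erase hx1
          have hmix1 : ¬ (↑(insert b (w.erase a)) ⊆ Set.Iio ((Ns : ℕ) : Ordinal.{v})) := by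
            intro h
            have : x1 ∈ (↑(insert b (w.erase a)) : Set Ordinal.{v}) :=
              Finset.mem_coe.2 (Finset.mem_insert_of_mem hx1)
            exact absurd (h this) (not_lt.2 (hwq hx1w).1)
          have hmix2 : ¬ (↑(insert b (w.erase a)) ⊆
              Set.Ico ((Ns : ℕ) : Ordinal.{v}) ((Ns + F.card : ℕ) : Ordinal.{v})) := by
            intro h
            exact absurd (h (by simp)).1 (not_le.2 hbq)
          have hlt := Jt_pure_lt s q Ns F hw (Or.inr hwq)
          rw [Jt_mixed s q Ns F hmix1 hmix2] at C2
          omega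
    · -- Case C : w is mixed
      have hk0 : Kt s q Ns F w = 0 := Kt_mixed s q Ns F hws hwq
      rw [Set.not_subset] at hws
      obtain ⟨x1, hx1w', hx1⟩ := hws
      have hx1w : x1 ∈ w := hx1w'
      rw [Set.mem_Iio, not_lt] at hx1
      obtain ⟨x0, hx0w', hx0⟩ := Set.not_subset.1 hwq
      have hx0w : x0 ∈ w := hx0w'
      have hx0s : x0 < ((Ns : ℕ) : Ordinal.{v}) := by
        by_contra hcon
        exact hx0 ⟨not_lt.1 hcon, hw hx0w'⟩
      have hmina : ∀ x ∈ w, ¬ x < a := filter_zero_min (by rw [hka, hk0])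
      have hminb : ∀ x ∈ w, ¬ x < b := filter_zero_min (by rw [C1, hk0])
      have haNs : a < ((Ns : ℕ) : Ordinal.{v}) := lt_of_le_of_lt (not_lt.1 (hmina x0 hx0w)) hx0s
      have hbNs : b < ((Ns : ℕ) : Ordinal.{v}) := by
        have hble : b ≤ x0 := not_lt.1 (hminb x0 hx0w)
        exact lt_of_le_of_lt hble hx0s
      have hx1a : x1 ≠ a := by
        intro h
        rw [h] at hx1
        exact absurd haNs (not_lt.2 hx1)
      have hx1e : x1 ∈ w.erase a := Finset.mem_erase.2 ⟨hx1a, hx1w⟩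
      have hmix1 : ¬ (↑(insert b (w.erase a)) ⊆ Set.Iio ((Ns : ℕ) : Ordinal.{v})) := by
        intro h
        have : x1 ∈ (↑(insert b (w.erase a)) : Set Ordinal.{v}) :=
          Finset.mem_coe.2 (Finset.mem_insert_of_mem hx1e)
        exact absurd (h this) (not_lt.2 hx1)
      have hmix2 : ¬ (↑(insert b (w.erase a)) ⊆
          Set.Ico ((Ns : ℕ) : Ordinal.{v}) ((Ns + F.card : ℕ) : Ordinal.{v})) := by
        intro h
        exact absurd (h (by simp)).1 (not_le.2 hbNs)
      have hwmix1 : ¬ (↑w ⊆ Set.Iio ((Ns : ℕ) : Ordinal.{v})) := by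
        intro h
        exact absurd (h hx1w') (not_lt.2 hx1)
      rw [Jt_mixed s q Ns F hmix1 hmix2, Jt_mixed s q Ns F hwmix1 hwq] at C2
      have hne := sum_onat_ne (Ns + F.card) w hw haw hbw hb
      omega

/-- Cut-and-paste for finite `YZR(ε)`-systems (Claim 3.6): any finite `YZR(ε)`-system `q`
can be copied into an end-extension `t` of a finite system `s` whose universe is an initial
segment of `ω`, with the copy placed inside `[Nˢ, Nᵗ)`. -/
theorem stmt_16 (ε : Ordinal) (h0 : 0 < ε) (h1 : ε < (Cardinal.aleph 1).ord)
    (Ns : ℕ) (hNs : 0 < Ns) (s : YZRSystem ε) (hXs : s.X = Set.Iio (Ns : Ordinal))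
    (q : YZRSystem ε) (hq : q.X.Finite) :
    ∃ (Nt : ℕ) (t : YZRSystem ε), Ns ≤ Nt ∧ t.X = Set.Iio (Nt : Ordinal) ∧
      (∀ w : Finset Ordinal, w.Nonempty → ↑w ⊆ s.X →
        t.r w = s.r w ∧ t.j w = s.j w ∧ t.k w = s.k w) ∧
      ∃ φ : Ordinal → Ordinal, Set.InjOn φ q.X ∧ StrictMonoOn φ q.X ∧
        (∀ a ∈ q.X, (Ns : Ordinal) ≤ φ a ∧ φ a < (Nt : Ordinal)) ∧
        ∀ v : Finset Ordinal, v.Nonempty → ↑v ⊆ q.X →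
          t.r (v.image φ) = q.r v ∧ t.j (v.image φ) = q.j v ∧ t.k (v.image φ) = q.k v := by
  classical
  set F : Finset Ordinal := hq.toFinset with hFdef
  have hF : ↑F = q.X := hq.coe_toFinset
  refine ⟨Ns + F.card,
    { X := Set.Iio ((Ns + F.card : ℕ) : Ordinal)
      nonempty := ⟨0, by
        have h : 0 < Ns + F.card := Nat.lt_of_lt_of_le hNs (Nat.le_add_right _ _)
        simp only [Set.mem_Iio]
        exact_mod_cast h⟩
      r := Rt s q Ns F
      j := Jt s q Ns F
      k := Kt s q Ns F
      r_le := ?_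
      mono := ?_
      r_pos := ?_
      k_lt := ?_
      witness := Tt_witness s q Ns F hXs hF },
    Nat.le_add_right _ _, rfl, ?_, phi Ns F, ?_, ?_, ?_, ?_⟩
  · -- r_le
    intro w hne hwX
    by_cases h1 : ↑w ⊆ Set.Iio ((Ns : ℕ) : Ordinal)
    · rw [Rt_s s q Ns F h1]
      exact s.r_le w hne (by rw [hXs]; exact h1)
    · by_cases h2 : ↑w ⊆ Set.Ico ((Ns : ℕ) : Ordinal) ((Ns + F.card : ℕ) : Ordinal)
      · rw [Rt_q s q Ns F hne h2]
        exact q.r_le _ (hne.image _) (hF ▸ image_psi_subset Ns F w h2)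
      · rw [Rt_mixed s q Ns F h1 h2]
        exact zero_le (a := ε)
  · -- mono
    intro uu w hu huw hwX
    by_cases h1 : ↑w ⊆ Set.Iio ((Ns : ℕ) : Ordinal)
    · have h1u : ↑uu ⊆ Set.Iio ((Ns : ℕ) : Ordinal) := (Finset.coe_subset.2 huw).trans h1
      rw [Rt_s s q Ns F h1, Rt_s s q Ns F h1u]
      exact s.mono uu w hu huw (by rw [hXs]; exact h1)
    · by_cases h2 : ↑w ⊆ Set.Ico ((Ns : ℕ) : Ordinal) ((Ns + F.card : ℕ) : Ordinal)
      · have h2u : ↑uu ⊆ Set.Ico ((Ns : ℕ) : Ordinal) ((Ns + F.card : ℕ) : Ordinal) :=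
          (Finset.coe_subset.2 huw).trans h2
        rw [Rt_q s q Ns F (hu.mono huw) h2, Rt_q s q Ns F hu h2u]
        exact q.mono (uu.image (psi Ns F)) (w.image (psi Ns F)) (hu.image _)
          (Finset.image_subset_image huw) (hF ▸ image_psi_subset Ns F w h2)
      · rw [Rt_mixed s q Ns F h1 h2]
        exact zero_le
  · -- r_pos
    intro a haX
    rcases lt_or_ge a ((Ns : ℕ) : Ordinal) with hlt | hge
    · rw [Rt_s s q Ns F (by rw [Finset.coe_singleton, Set.singleton_subset_iff]; exact hlt)]
      exact s.r_pos a (by rw [hXs]; exact hlt)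
    · have hIco : ↑({a} : Finset Ordinal) ⊆
          Set.Ico ((Ns : ℕ) : Ordinal) ((Ns + F.card : ℕ) : Ordinal) := by
        rw [Finset.coe_singleton, Set.singleton_subset_iff]
        exact ⟨hge, haX⟩
      rw [Rt_q s q Ns F (Finset.singleton_nonempty a) hIco, Finset.image_singleton]
      exact q.r_pos _ (hF ▸ (psi_mem_and_phi_psi Ns F hge haX).1)
  · -- k_lt
    intro w hne hwX
    by_cases h1 : ↑w ⊆ Set.Iio ((Ns : ℕ) : Ordinal)
    · rw [Kt_s s q Ns F h1]
      exact s.k_lt w hne (by rw [hXs]; exact h1)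
    · by_cases h2 : ↑w ⊆ Set.Ico ((Ns : ℕ) : Ordinal) ((Ns + F.card : ℕ) : Ordinal)
      · rw [Kt_q s q Ns F hne h2]
        exact lt_of_lt_of_le
          (q.k_lt _ (hne.image _) (hF ▸ image_psi_subset Ns F w h2))
          Finset.card_image_le
      · rw [Kt_mixed s q Ns F h1 h2]
        exact Finset.card_pos.2 hne
  · -- restriction to s
    intro w hne hws'
    rw [hXs] at hws'
    exact ⟨Rt_s s q Ns F hws', Jt_s s q Ns F hws', Kt_s s q Ns F hws'⟩
  · -- injectivity
    rw [← hF]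
    exact phi_injOn Ns F
  · -- strict monotonicity
    rw [← hF]
    exact phi_strictMonoOn Ns F
  · -- bounds
    intro a ha
    have haF : a ∈ F := by rw [← Finset.mem_coe, hF]; exact ha
    exact ⟨phi_ge Ns F haF, phi_lt Ns F haF⟩
  · -- copy of q
    intro v hv hvX
    have hvF : v ⊆ F := by
      rw [← Finset.coe_subset, hF]
      exact hvX
    have hIco := image_phi_Ico Ns F hvF
    have hne' := hv.image (phi Ns F)
    refine ⟨?_, ?_, ?_⟩
    · show Rt s q Ns F (v.image (phi Ns F)) = q.r v
      rw [Rt_q s q Ns F hne' hIco, image_psi_image_phi Ns F v hvF]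
    · show Jt s q Ns F (v.image (phi Ns F)) = q.j v
      rw [Jt_q s q Ns F hne' hIco, image_psi_image_phi Ns F v hvF]
    · show Kt s q Ns F (v.image (phi Ns F)) = q.k v
      rw [Kt_q s q Ns F hne' hIco, image_psi_image_phi Ns F v hvF]
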